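/- Let Q be a countable linear order with no least and no greatest element, let I be a nonempty set, and let c : Q → I be a coloring such that for all q < q' in Q and every i ∈ I there exists r with q < r < q' and c r = i. Let (Y i)_{i ∈ I} be a family of linear orders and Z a linear order such that Z and all the Y i are pairwise lower isomorphic (including each lower isomorphic to itself). Then the linear order (Σₗ (q : Q), Y (c q)) ⊕ₗ Z — the lexicographic sum of the fibers Y (c q) over Q, followed by a copy of Z — is lower 1-transitive. -/

import Mathlib

/-- A linear order is lower 1-transitive if any two of its initial segments
are order-isomorphic. -/
def LowerOneTransitive (X : Type*) [LinearOrder X] : Prop :=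
  ∀ a b : X, Nonempty (Set.Iic a ≃o Set.Iic b)

/-- Two linear orders are lower isomorphic if any two initial segments
(one from each) are order-isomorphic. -/
def LowerIsomorphic (X Y : Type*) [LinearOrder X] [LinearOrder Y] : Prop :=
  ∀ (a : X) (b : Y), Nonempty (Set.Iic a ≃o Set.Iic b)

noncomputable section
namespace ColoredBF


open Order

variable {I : Type*} {α β : Type*} [LinearOrder α] [LinearOrder β]

/-- Every colour appears densely. -/
def ColorDense (c : α → I) : Prop :=
  ∀ a b : α, a < b → ∀ i : I, ∃ r, a < r ∧ r < b ∧ c r = i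

theorem ColorDense.exists_gt {c : α → I} (hd : ColorDense c) [NoMaxOrder α] (x : α) (i : I) :
    ∃ m, x < m ∧ c m = i := by
  obtain ⟨x', hx'⟩ := NoMaxOrder.exists_gt x
  obtain ⟨r, h1, _, h3⟩ := hd x x' hx' i
  exact ⟨r, h1, h3⟩

theorem ColorDense.exists_lt {c : α → I} (hd : ColorDense c) [NoMinOrder α] (x : α) (i : I) :
    ∃ m, m < x ∧ c m = i := by
  obtain ⟨x', hx'⟩ := NoMinOrder.exists_lt x
  obtain ⟨r, h1, h2, h3⟩ := hd x' x hx' i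
  exact ⟨r, h2, h3⟩

theorem exists_between_finsets_color {c : β → I} (hd : ColorDense c)
    [NoMinOrder β] [NoMaxOrder β] [Nonempty β]
    (lo hi : Finset β) (lo_lt_hi : ∀ x ∈ lo, ∀ y ∈ hi, x < y) (i : I) :
    ∃ m : β, (∀ x ∈ lo, x < m) ∧ (∀ y ∈ hi, m < y) ∧ c m = i := by
  by_cases nlo : lo.Nonempty <;> by_cases nhi : hi.Nonempty
  · obtain ⟨m, h1, h2, h3⟩ :=
      hd _ _ (lo_lt_hi _ (Finset.max'_mem _ nlo) _ (Finset.min'_mem _ nhi)) i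
    exact ⟨m, fun x hx => (Finset.le_max' lo x hx).trans_lt h1,
      fun y hy => h2.trans_le (Finset.min'_le hi y hy), h3⟩
  · obtain ⟨m, h1, h3⟩ := hd.exists_gt (Finset.max' lo nlo) i
    exact ⟨m, fun x hx => (Finset.le_max' lo x hx).trans_lt h1,
      fun y hy => (nhi ⟨y, hy⟩).elim, h3⟩
  · obtain ⟨m, h1, h3⟩ := hd.exists_lt (Finset.min' hi nhi) i
    exact ⟨m, fun x hx => (nlo ⟨x, hx⟩).elim,
      fun y hy => h1.trans_le (Finset.min'_le hi y hy), h3⟩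
  · obtain ⟨x⟩ := ‹Nonempty β›
    obtain ⟨m, _, h3⟩ := ColorDense.exists_gt hd x i
    exact ⟨m, fun x hx => (nlo ⟨x, hx⟩).elim, fun y hy => (nhi ⟨y, hy⟩).elim, h3⟩

/-- Colour-preserving partial isomorphisms. -/
def CPartialIso (cα : α → I) (cβ : β → I) : Type _ :=
  { f : Finset (α × β) //
    (∀ p ∈ f, ∀ q ∈ f, cmp (Prod.fst p) (Prod.fst q) = cmp (Prod.snd p) (Prod.snd q)) ∧
      ∀ p ∈ f, cα (Prod.fst p) = cβ (Prod.snd p) }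

namespace CPartialIso

variable {cα : α → I} {cβ : β → I}

instance : Inhabited (CPartialIso cα cβ) :=
  ⟨⟨∅, fun _p h => (Finset.notMem_empty _ h).elim,
    fun _p h => (Finset.notMem_empty _ h).elim⟩⟩

instance : Preorder (CPartialIso cα cβ) := Subtype.preorder _

theorem exists_across (hd : ColorDense cβ) [NoMinOrder β] [NoMaxOrder β] [Nonempty β]
    (f : CPartialIso cα cβ) (a : α) :
    ∃ b : β, cβ b = cα a ∧ ∀ p ∈ f.val, cmp (Prod.fst p) a = cmp (Prod.snd p) b := by
  by_cases h : ∃ b, (a, b) ∈ f.val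
  · obtain ⟨b, hb⟩ := h
    exact ⟨b, (f.prop.2 _ hb).symm, fun p hp => f.prop.1 _ hp _ hb⟩
  have key : ∀ x ∈ (f.val.filter fun p : α × β => p.fst < a).image Prod.snd,
      ∀ y ∈ (f.val.filter fun p : α × β => a < p.fst).image Prod.snd, x < y := by
    intro x hx y hy
    rw [Finset.mem_image] at hx hy
    rcases hx with ⟨p, hp1, rfl⟩
    rcases hy with ⟨q, hq1, rfl⟩
    rw [Finset.mem_filter] at hp1 hq1
    rw [← lt_iff_lt_of_cmp_eq_cmp (f.prop.1 _ hp1.1 _ hq1.1)]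
    exact lt_trans hp1.right hq1.right
  obtain ⟨b, hb, hb', hbc⟩ := exists_between_finsets_color hd _ _ key (cα a)
  refine ⟨b, hbc, ?_⟩
  rintro ⟨p1, p2⟩ hp
  have hne : p1 ≠ a := fun he => h ⟨p2, he ▸ hp⟩
  rcases lt_or_gt_of_ne hne with hl | hr
  · have : p1 < a ∧ p2 < b :=
      ⟨hl, hb _ (Finset.mem_image.mpr ⟨(p1, p2), Finset.mem_filter.mpr ⟨hp, hl⟩, rfl⟩)⟩
    rw [← cmp_eq_lt_iff, ← cmp_eq_lt_iff] at this
    exact this.1.trans this.2.symm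
  · have : a < p1 ∧ b < p2 :=
      ⟨hr, hb' _ (Finset.mem_image.mpr ⟨(p1, p2), Finset.mem_filter.mpr ⟨hp, hr⟩, rfl⟩)⟩
    rw [← cmp_eq_gt_iff, ← cmp_eq_gt_iff] at this
    exact this.1.trans this.2.symm

/-- Flip a colour-preserving partial isomorphism. -/
protected def comm (f : CPartialIso cα cβ) : CPartialIso cβ cα :=
  ⟨f.val.image (Equiv.prodComm α β), by
    constructor
    · intro p hp q hq
      rw [Finset.mem_image] at hp hq
      obtain ⟨p', hp', rfl⟩ := hp
      obtain ⟨q', hq', rfl⟩ := hq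
      exact (f.prop.1 _ hp' _ hq').symm
    · intro p hp
      rw [Finset.mem_image] at hp
      obtain ⟨p', hp', rfl⟩ := hp
      exact (f.prop.2 _ hp').symm⟩

/-- Cofinal set of partial isomorphisms defined at `a : α`. -/
def definedAtLeft (hd : ColorDense cβ) [NoMinOrder β] [NoMaxOrder β] [Nonempty β]
    (a : α) : Cofinal (CPartialIso cα cβ) where
  carrier := {f | ∃ b : β, (a, b) ∈ f.val}
  isCofinal f := by
    obtain ⟨b, hbc, a_b⟩ := exists_across hd f a
    refine ⟨⟨insert (a, b) f.val, ?_, ?_⟩, ⟨b, Finset.mem_insert_self _ _⟩,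
      Finset.subset_insert _ _⟩
    · intro p hp q hq
      rw [Finset.mem_insert] at hp hq
      rcases hp with (rfl | pf) <;> rcases hq with (rfl | qf)
      · simp only [cmp_self_eq_eq]
      · rw [cmp_eq_cmp_symm]; exact a_b _ qf
      · exact a_b _ pf
      · exact f.prop.1 _ pf _ qf
    · intro p hp
      rw [Finset.mem_insert] at hp
      rcases hp with rfl | pf
      · exact hbc.symm
      · exact f.prop.2 _ pf

/-- Cofinal set of partial isomorphisms hitting `b : β`. -/
def definedAtRight (hd : ColorDense cα) [NoMinOrder α] [NoMaxOrder α] [Nonempty α]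
    (b : β) : Cofinal (CPartialIso cα cβ) where
  carrier := {f | ∃ a, (a, b) ∈ f.val}
  isCofinal f := by
    rcases (definedAtLeft hd b).isCofinal f.comm with ⟨f', ⟨a, ha⟩, hl⟩
    refine ⟨f'.comm, ⟨a, ?_⟩, ?_⟩
    · change (a, b) ∈ f'.val.image _
      rwa [← Finset.mem_coe, Finset.coe_image, Equiv.image_eq_preimage_symm]
    · change f.val ⊆ f'.val.image _
      intro p hp
      rw [← Finset.mem_coe, Finset.coe_image, Equiv.image_eq_preimage_symm]
      have : (Equiv.prodComm α β) p ∈ f'.val := hl (Finset.mem_image_of_mem _ hp)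
      simpa using this

end CPartialIso

open CPartialIso in
/-- Coloured Cantor back-and-forth: any two countable colour-dense linear orders
without endpoints are isomorphic by a colour-preserving order isomorphism. -/
theorem exists_colored_iso {cα : α → I} {cβ : β → I}
    [Countable α] [Countable β]
    [NoMinOrder α] [NoMaxOrder α] [Nonempty α]
    [NoMinOrder β] [NoMaxOrder β] [Nonempty β]
    (hdα : ColorDense cα) (hdβ : ColorDense cβ) :
    ∃ e : α ≃o β, ∀ a, cβ (e a) = cα a := by
  cases nonempty_encodable α
  cases nonempty_encodable β
  let to_cofinal : α ⊕ β → Cofinal (CPartialIso cα cβ) := fun p =>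
    Sum.recOn p (definedAtLeft hdβ) (definedAtRight hdα)
  let our_ideal : Ideal (CPartialIso cα cβ) := idealOfCofinals default to_cofinal
  have hF : ∀ a : α, ∃ b : β, ∃ f ∈ our_ideal, (a, b) ∈ f.val := by
    intro a
    obtain ⟨f, ⟨b, hb⟩, hf⟩ := cofinal_meets_idealOfCofinals default to_cofinal (Sum.inl a)
    exact ⟨b, f, hf, hb⟩
  have hG : ∀ b : β, ∃ a : α, ∃ f ∈ our_ideal, (a, b) ∈ f.val := by
    intro b
    obtain ⟨f, ⟨a, ha⟩, hf⟩ := cofinal_meets_idealOfCofinals default to_cofinal (Sum.inr b)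
    exact ⟨a, f, hf, ha⟩
  choose F hFmem using hF
  choose G hGmem using hG
  refine ⟨OrderIso.ofCmpEqCmp F G fun a b => ?_, fun a => ?_⟩
  · obtain ⟨f, hf, ha⟩ := hFmem a
    obtain ⟨g, hg, hb⟩ := hGmem b
    rcases our_ideal.directed _ hf _ hg with ⟨m, _, fm, gm⟩
    exact m.prop.1 (a, _) (fm ha) (_, b) (gm hb)
  · obtain ⟨f, _, ha⟩ := hFmem a
    exact (f.prop.2 _ ha).symm



variable {I : Type*} (Y : I → Type*) [∀ i, LinearOrder (Y i)]

/-- Transport along an equality of colours. -/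
def castY {i j : I} (h : i = j) : Y i ≃o Y j := by subst h; exact OrderIso.refl _

theorem castY_castY {i j : I} (h : i = j) (v : Y j) :
    castY Y h (castY Y h.symm v) = v := by subst h; rfl

/-- A colour-preserving isomorphism of index orders induces an isomorphism of
lexicographic sums. -/
def sigmaIso {S T : Type*} [LinearOrder S] [LinearOrder T]
    {cS : S → I} {cT : T → I} (e : S ≃o T) (he : ∀ s, cT (e s) = cS s) :
    (Σₗ (s : S), Y (cS s)) ≃o (Σₗ (t : T), Y (cT t)) := by
  refine StrictMono.orderIsoOfSurjective
    (fun p => toLex ⟨e (ofLex p).1, castY Y (he (ofLex p).1).symm (ofLex p).2⟩) ?_ ?_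
  · rintro ⟨s, u⟩ ⟨s', u'⟩ h
    replace h := Sigma.Lex.lt_def.1 h; refine Sigma.Lex.lt_def.2 ?_
    obtain h | ⟨h1, h2⟩ := h
    · exact Or.inl (e.strictMono h)
    · dsimp only at h1 ⊢
      subst h1
      exact Or.inr ⟨rfl, (castY Y (he s).symm).strictMono h2⟩
  · rintro ⟨t, v⟩
    obtain ⟨s, rfl⟩ := e.surjective t
    exact ⟨toLex ⟨s, castY Y (he s) v⟩,
      congrArg toLex (congrArg (Sigma.mk (e s)) (castY_castY Y (he s).symm v))⟩

/-- Congruence of lexicographic sums of two orders. -/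
def sumLexIso {A B C D : Type*} [LinearOrder A] [LinearOrder B] [LinearOrder C] [LinearOrder D]
    (f : A ≃o C) (g : B ≃o D) : (A ⊕ₗ B) ≃o (C ⊕ₗ D) := by
  refine StrictMono.orderIsoOfSurjective (fun x => toLex (Sum.map f g (ofLex x))) ?_ ?_
  · intro x y h
    obtain a | b := x <;> obtain a' | b' := y
    · exact Sum.Lex.inl_lt_inl_iff.2 (f.strictMono (Sum.Lex.inl_lt_inl_iff.1 h))
    · exact Sum.Lex.inl_lt_inr _ _
    · exact absurd h Sum.Lex.not_inr_lt_inl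
    · exact Sum.Lex.inr_lt_inr_iff.2 (g.strictMono (Sum.Lex.inr_lt_inr_iff.1 h))
  · intro x
    obtain a | b := x
    · exact ⟨toLex (Sum.inl (f.symm a)),
        by show toLex (Sum.inl (f (f.symm a))) = _; rw [f.apply_symm_apply]; rfl⟩
    · exact ⟨toLex (Sum.inr (g.symm b)),
        by show toLex (Sum.inr (g (g.symm b))) = _; rw [g.apply_symm_apply]; rfl⟩

variable {Q : Type*} [LinearOrder Q] (c : Q → I) {Z : Type*} [LinearOrder Z]

/-- Decomposition of the initial segment at a point of the final summand. -/
def iicInr (z : Z) :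
    ((Σₗ (q : Q), Y (c q)) ⊕ₗ (Set.Iic z)) ≃o
      Set.Iic (toLex (Sum.inr z) : (Σₗ (q : Q), Y (c q)) ⊕ₗ Z) := by
  refine StrictMono.orderIsoOfSurjective (fun w => Sum.rec
      (fun p => (⟨toLex (Sum.inl p), Set.mem_Iic.2 (le_of_lt (Sum.Lex.inl_lt_inr _ _))⟩ :
        Set.Iic (toLex (Sum.inr z) : (Σₗ (q : Q), Y (c q)) ⊕ₗ Z)))
      (fun zz => ⟨toLex (Sum.inr zz.val), Sum.Lex.inr_le_inr_iff.2 zz.prop⟩)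
      (ofLex w)) ?_ ?_
  · intro x y h
    obtain p | zz := x <;> obtain p' | zz' := y
    · have h' : p < p' := Sum.Lex.inl_lt_inl_iff.1 h
      exact Sum.Lex.inl_lt_inl_iff.2 h'
    · exact Sum.Lex.inl_lt_inr _ _
    · exact absurd h Sum.Lex.not_inr_lt_inl
    · have h' : zz < zz' := Sum.Lex.inr_lt_inr_iff.1 h
      exact Sum.Lex.inr_lt_inr_iff.2 (Subtype.coe_lt_coe.2 h')
  · rintro ⟨x, hx⟩
    obtain p | z' := x
    · exact ⟨toLex (Sum.inl p), rfl⟩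
    · exact ⟨toLex (Sum.inr ⟨z', Sum.Lex.inr_le_inr_iff.1 hx⟩), rfl⟩

/-- Decomposition of the initial segment at a point of the sigma part. -/
def iicInl (q : Q) (y : Y (c q)) :
    ((Σₗ (s : Set.Iio q), Y (c s.val)) ⊕ₗ (Set.Iic y)) ≃o
      Set.Iic (toLex (Sum.inl (toLex ⟨q, y⟩)) : (Σₗ (q : Q), Y (c q)) ⊕ₗ Z) := by
  refine StrictMono.orderIsoOfSurjective (fun w => Sum.rec
      (fun p => (⟨toLex (Sum.inl (toLex ⟨(ofLex p).1.val, (ofLex p).2⟩)),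
        Sum.Lex.inl_le_inl_iff.2 (le_of_lt (Sigma.Lex.lt_def.2 (Or.inl (ofLex p).1.prop)))⟩ :
        Set.Iic (toLex (Sum.inl (toLex ⟨q, y⟩)) : (Σₗ (q : Q), Y (c q)) ⊕ₗ Z)))
      (fun u => ⟨toLex (Sum.inl (toLex ⟨q, u.val⟩)),
        Sum.Lex.inl_le_inl_iff.2 (Sigma.Lex.le_def.2 (Or.inr ⟨rfl, u.prop⟩))⟩)
      (ofLex w)) ?_ ?_
  · intro x x' h
    obtain p | u := x <;> obtain p' | u' := x'
    · refine Sum.Lex.inl_lt_inl_iff.2 ?_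
      have h' := Sum.Lex.inl_lt_inl_iff.1 h
      obtain ⟨⟨r, hr⟩, v⟩ := p
      obtain ⟨⟨r', hr'⟩, v'⟩ := p'
      replace h' := Sigma.Lex.lt_def.1 h'; refine Sigma.Lex.lt_def.2 ?_
      obtain hlt | ⟨h1, h2⟩ := h'
      · exact Or.inl hlt
      · obtain rfl : r = r' := congrArg Subtype.val h1
        exact Or.inr ⟨rfl, h2⟩
    · refine Sum.Lex.inl_lt_inl_iff.2 (Sigma.Lex.lt_def.2 (Or.inl (ofLex p).1.prop))
    · exact absurd h Sum.Lex.not_inr_lt_inl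
    · have h' : u < u' := Sum.Lex.inr_lt_inr_iff.1 h
      exact Sum.Lex.inl_lt_inl_iff.2 (Sigma.Lex.lt_def.2 (Or.inr ⟨rfl, h'⟩))
  · rintro ⟨x, hx⟩
    obtain p | z' := x
    · obtain ⟨r, v⟩ := p
      have hle := Sum.Lex.inl_le_inl_iff.1 hx
      replace hle := Sigma.Lex.le_def.1 hle
      obtain hlt | ⟨h1, h2⟩ := hle
      · exact ⟨toLex (Sum.inl (toLex ⟨⟨r, hlt⟩, v⟩)), rfl⟩
      · have h1' : r = q := h1
        revert h2
        subst h1'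
        intro h2
        exact ⟨toLex (Sum.inr ⟨v, h2⟩), rfl⟩
    · exact absurd hx Sum.Lex.not_inr_le_inl


variable {I : Type*}

section Iio
variable {Q : Type*} [LinearOrder Q] {c : Q → I}

theorem ColorDense.iio [Nonempty I] (hd : ColorDense c) (q : Q) :
    ColorDense (fun s : Set.Iio q => c s.val) := by
  rintro ⟨p, hp⟩ ⟨p', hp'⟩ hlt i
  obtain ⟨r, h1, h2, h3⟩ := hd p p' hlt i
  exact ⟨⟨r, h2.trans hp'⟩, h1, h2, h3⟩

theorem ColorDense.noMax_iio [Nonempty I] (hd : ColorDense c) (q : Q) :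
    NoMaxOrder (Set.Iio q) := by
  constructor
  rintro ⟨p, hp⟩
  obtain ⟨r, h1, h2, -⟩ := hd p q hp (Classical.arbitrary I)
  exact ⟨⟨r, h2⟩, h1⟩

theorem noMin_iio [NoMinOrder Q] (q : Q) : NoMinOrder (Set.Iio q) := by
  constructor
  rintro ⟨p, hp⟩
  obtain ⟨p', hp'⟩ := NoMinOrder.exists_lt p
  exact ⟨⟨p', hp'.trans hp⟩, hp'⟩

theorem nonempty_iio [NoMinOrder Q] (q : Q) : Nonempty (Set.Iio q) := by
  obtain ⟨p, hp⟩ := NoMinOrder.exists_lt q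
  exact ⟨⟨p, hp⟩⟩

end Iio
end ColoredBF
end

open ColoredBF in
/-- If `Q` is a countable dense-coloured linear order without endpoints with colours
in `I`, `(Y i)` is a family of linear orders and `Z` a linear order such that `Z` and
all the `Y i` are pairwise lower isomorphic, then `(Σₗ (q : Q), Y (c q)) ⊕ₗ Z`
(the order ℚ_n(Y₀, …) + Z of the paper) is lower 1-transitive. -/
theorem lowerOneTransitive_ratMixture_add
    {Q : Type*} [LinearOrder Q] [Countable Q] [NoMinOrder Q] [NoMaxOrder Q]
    {I : Type*} [Nonempty I] (c : Q → I)
    (hc : ∀ q q' : Q, q < q' → ∀ i : I, ∃ r : Q, q < r ∧ r < q' ∧ c r = i)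
    (Y : I → Type*) [∀ i, LinearOrder (Y i)]
    (Z : Type*) [LinearOrder Z]
    (hYY : ∀ i j : I, LowerIsomorphic (Y i) (Y j))
    (hYZ : ∀ i : I, LowerIsomorphic (Y i) Z)
    (hZY : ∀ i : I, LowerIsomorphic Z (Y i))
    (hZZ : LowerIsomorphic Z Z) :
    LowerOneTransitive ((Σₗ (q : Q), Y (c q)) ⊕ₗ Z) := by
  classical
  have hQ : ColorDense c := hc
  intro a b
  obtain p | z := a
  · obtain ⟨q, y⟩ := p
    obtain p' | z' := b
    · -- inl / inl
      obtain ⟨q', y'⟩ := p'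
      haveI := hQ.noMax_iio q; haveI := noMin_iio q; haveI := nonempty_iio q
      haveI := hQ.noMax_iio q'; haveI := noMin_iio q'; haveI := nonempty_iio q'
      obtain ⟨e, he⟩ := exists_colored_iso (hQ.iio q) (hQ.iio q')
      obtain ⟨g⟩ := hYY (c q) (c q') y y'
      exact ⟨(iicInl Y c q y).symm.trans
        ((sumLexIso (sigmaIso Y e he) g).trans (iicInl Y c q' y'))⟩
    · -- inl / inr
      haveI := hQ.noMax_iio q; haveI := noMin_iio q; haveI := nonempty_iio q
      haveI : Nonempty Q := ⟨q⟩
      obtain ⟨e, he⟩ := exists_colored_iso (hQ.iio q) hQ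
      obtain ⟨g⟩ := hYZ (c q) y z'
      exact ⟨(iicInl Y c q y).symm.trans
        ((sumLexIso (sigmaIso Y e he) g).trans (iicInr Y c z'))⟩
  · obtain p' | z' := b
    · -- inr / inl
      obtain ⟨q', y'⟩ := p'
      haveI := hQ.noMax_iio q'; haveI := noMin_iio q'; haveI := nonempty_iio q'
      haveI : Nonempty Q := ⟨q'⟩
      obtain ⟨e, he⟩ := exists_colored_iso hQ (hQ.iio q')
      obtain ⟨g⟩ := hZY (c q') z y'
      exact ⟨(iicInr Y c z).symm.trans
        ((sumLexIso (sigmaIso Y e he) g).trans (iicInl Y c q' y'))⟩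
    · -- inr / inr
      obtain ⟨g⟩ := hZZ z z'
      exact ⟨(iicInr Y c z).symm.trans
        ((sumLexIso (sigmaIso Y (OrderIso.refl Q) (fun _ => rfl)) g).trans (iicInr Y c z'))⟩
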